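/- Fix b, c > 0 and d = 0. Let (Φ_n)_{n ≥ 2} satisfy Φ_2 = 1 and c(n+2)Φ_{n+1} + (b − c(n+1))Φ_n − b((n−2)/(n−1))Φ_{n−1} = 0 for n ≥ 2, and assume that (n Φ_n)_{n ≥ 2} converges to a finite limit Φ_∞. Then for every n ≥ 2 the series W_n := Σ_{k ≥ 2} Φ_k / (n+k) converges, and the sequence W = (W_n)_{n ≥ 2} satisfies (L W)_n = c Φ_∞ / (n+1) for all n ≥ 2, i.e., L W = c Φ_∞ e^{(1)}. -/

import Mathlib

set_option maxHeartbeats 1000000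

open Filter Topology


/-- The one-dimensional operator L acting on real sequences (for indices `n ≥ 2`),
here with `d = 0` passed explicitly. -/
noncomputable def Lop (b c d : ℝ) (w : ℕ → ℝ) (n : ℕ) : ℝ :=
  -b * (((n : ℝ) + 2) / ((n : ℝ) + 1)) * w (n + 1)
    + (b + c * ((n : ℝ) - 1) + d) * w n
    - ((n : ℝ) - 2) * (c + d / ((n : ℝ) - 1)) * w (n - 1)

/-- Auxiliary telescoping sequence. -/
noncomputable def Tfun (b c : ℝ) (Φ : ℕ → ℝ) (N : ℝ) (j : ℕ) : ℝ :=
  -(c * ((j : ℝ) + 4) * Φ (j + 3) + b * Φ (j + 2)) / (N + 1)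
    + c * ((j : ℝ) + 3) * Φ (j + 2) / (N + (j : ℝ) + 1)
    + b * (j : ℝ) / ((j : ℝ) + 1) * Φ (j + 1) / (N + (j : ℝ) + 2)

lemma telescope_step (b c : ℝ) (hc : 0 < c) (Φ : ℕ → ℝ)
    (hrec : ∀ n : ℕ, 2 ≤ n →
      c * ((n : ℝ) + 2) * Φ (n + 1) + (b - c * ((n : ℝ) + 1)) * Φ n
        - b * (((n : ℝ) - 2) / ((n : ℝ) - 1)) * Φ (n - 1) = 0)
    (N : ℝ) (hN : 2 ≤ N) (j : ℕ) :
    -b * ((N + 2) / (N + 1)) * (Φ (j + 2) / (N + 1 + (j : ℝ) + 2))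
      + (b + c * (N - 1) + 0) * (Φ (j + 2) / (N + (j : ℝ) + 2))
      - (N - 2) * (c + 0 / (N - 1)) * (Φ (j + 2) / (N - 1 + (j : ℝ) + 2))
      = Tfun b c Φ N j - Tfun b c Φ N (j + 1) := by
  have hJ : (0:ℝ) ≤ (j : ℝ) := Nat.cast_nonneg j
  have h1 := hrec (j + 2) (by omega)
  have h2 := hrec (j + 3) (by omega)
  rw [show j + 2 + 1 = j + 3 by omega, show j + 2 - 1 = j + 1 by omega] at h1
  rw [show j + 3 + 1 = j + 4 by omega, show j + 3 - 1 = j + 2 by omega] at h2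
  push_cast at h1 h2
  have e1 : (j:ℝ) + 2 - 1 ≠ 0 := by nlinarith
  have e2 : c * ((j:ℝ) + 2 + 2) ≠ 0 := by positivity
  have e3 : (j:ℝ) + 3 - 1 ≠ 0 := by nlinarith
  have e4 : c * ((j:ℝ) + 3 + 2) ≠ 0 := by positivity
  have hΦ3 : Φ (j + 3) =
      (b * (((j:ℝ) + 2 - 2) / ((j:ℝ) + 2 - 1)) * Φ (j + 1)
        - (b - c * ((j:ℝ) + 2 + 1)) * Φ (j + 2)) / (c * ((j:ℝ) + 2 + 2)) := by
    rw [eq_div_iff e2]; linear_combination h1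
  have hΦ4 : Φ (j + 4) =
      (b * (((j:ℝ) + 3 - 2) / ((j:ℝ) + 3 - 1)) * Φ (j + 2)
        - (b - c * ((j:ℝ) + 3 + 1)) * Φ (j + 3)) / (c * ((j:ℝ) + 3 + 2)) := by
    rw [eq_div_iff e4]; linear_combination h2
  simp only [Tfun, show j + 1 + 3 = j + 4 by omega, show j + 1 + 2 = j + 3 by omega,
    show j + 1 + 1 = j + 2 by omega]
  push_cast
  rw [hΦ4, hΦ3]
  have d1 : N + 1 ≠ 0 := by positivity
  have d2 : N + (j:ℝ) + 1 ≠ 0 := by positivity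
  have d3 : N + (j:ℝ) + 2 ≠ 0 := by positivity
  have d4 : N + ((j:ℝ) + 1) + 1 ≠ 0 := by positivity
  have d5 : N + ((j:ℝ) + 1) + 2 ≠ 0 := by positivity
  have d6 : N + 1 + (j:ℝ) + 2 ≠ 0 := by positivity
  have d7 : N - 1 + (j:ℝ) + 2 ≠ 0 := by nlinarith
  have d8 : (j:ℝ) + 1 ≠ 0 := by positivity
  have d9 : (j:ℝ) + 1 + 1 ≠ 0 := by positivity
  have d10 : N - 1 ≠ 0 := by nlinarith
  field_simp
  ring

/-- Claim 1(ii) of the paper: if `Φ_2 = 1`, `Φ` satisfies the three-term recursion and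
`(n Φ_n)` converges to `Φ_∞`, then `W_n = Σ_{k ≥ 2} Φ_k/(n+k)` converges for every `n ≥ 2`
and `L W = c Φ_∞ e^{(1)}`. -/
theorem stmt_8 (b c : ℝ) (hb : 0 < b) (hc : 0 < c)
    (Φ : ℕ → ℝ) (hΦ2 : Φ 2 = 1)
    (hrec : ∀ n : ℕ, 2 ≤ n →
      c * ((n : ℝ) + 2) * Φ (n + 1) + (b - c * ((n : ℝ) + 1)) * Φ n
        - b * (((n : ℝ) - 2) / ((n : ℝ) - 1)) * Φ (n - 1) = 0)
    (Φinf : ℝ)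
    (hlim : Filter.Tendsto (fun n : ℕ => (n : ℝ) * Φ n) Filter.atTop (nhds Φinf)) :
    (∀ n : ℕ, 2 ≤ n → Summable (fun k : ℕ => Φ (k + 2) / ((n : ℝ) + (k : ℝ) + 2))) ∧
    ∀ n : ℕ, 2 ≤ n →
      Lop b c 0 (fun m : ℕ => ∑' k : ℕ, Φ (k + 2) / ((m : ℝ) + (k : ℝ) + 2)) n
        = c * Φinf / ((n : ℝ) + 1) := by
  -- boundedness of (n Φ_n)
  obtain ⟨M, hM⟩ : ∃ M : ℝ, ∀ k : ℕ, |(k : ℝ) * Φ k| ≤ M := by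
    obtain ⟨M, hM⟩ := (hlim.abs).bddAbove_range
    exact ⟨M, fun k => hM (Set.mem_range_self k)⟩
  have hM0 : 0 ≤ M := (abs_nonneg _).trans (hM 0)
  -- summability for every m : ℕ
  have hsum : ∀ m : ℕ, Summable (fun k : ℕ => Φ (k + 2) / ((m : ℝ) + (k : ℝ) + 2)) := by
    intro m
    apply Summable.of_abs
    have hbase : Summable (fun k : ℕ => M / ((k : ℝ) + 2) ^ 2) := by
      have h2 : Summable (fun n : ℕ => 1 / (n : ℝ) ^ 2) :=
        Real.summable_one_div_nat_pow.mpr (by norm_num)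
      have h3 := (summable_nat_add_iff 2).mpr h2
      have h4 : Summable (fun k : ℕ => 1 / ((k : ℝ) + 2) ^ 2) := by
        apply h3.congr
        intro k
        push_cast
        ring
      simpa [div_eq_mul_inv, mul_comm] using h4.mul_left M
    apply Summable.of_nonneg_of_le (fun k => abs_nonneg _) _ hbase
    intro k
    have hk2 : (0:ℝ) < (k : ℝ) + 2 := by positivity
    have hden : (0:ℝ) < (m : ℝ) + (k : ℝ) + 2 := by positivity
    have key : ((k : ℝ) + 2) * |Φ (k + 2)| ≤ M := by
      have h := hM (k + 2)
      rw [abs_mul, Nat.abs_cast] at h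
      push_cast at h
      exact h
    rw [abs_div, abs_of_pos hden, div_le_div_iff₀ hden (by positivity)]
    have hKD : (k : ℝ) + 2 ≤ (m : ℝ) + (k : ℝ) + 2 := by
      have : (0:ℝ) ≤ (m : ℝ) := Nat.cast_nonneg m
      linarith
    nlinarith [abs_nonneg (Φ (k + 2)), mul_le_mul_of_nonneg_right key hk2.le,
      mul_le_mul_of_nonneg_left hKD hM0]
  refine ⟨fun n _ => hsum n, ?_⟩
  intro n hn
  have hN : (2:ℝ) ≤ (n : ℝ) := by exact_mod_cast hn
  have hcast1 : ((n + 1 : ℕ) : ℝ) = (n : ℝ) + 1 := by push_cast; ring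
  have hcast2 : ((n - 1 : ℕ) : ℝ) = (n : ℝ) - 1 := by
    rw [Nat.cast_sub (by omega)]; norm_num
  simp only [Lop, hcast1, hcast2]
  have hs1 : Summable (fun k : ℕ => Φ (k + 2) / ((n : ℝ) + 1 + (k : ℝ) + 2)) := by
    have := hsum (n + 1)
    simp only [hcast1] at this
    exact this
  have hs2 : Summable (fun k : ℕ => Φ (k + 2) / ((n : ℝ) + (k : ℝ) + 2)) := hsum n
  have hs3 : Summable (fun k : ℕ => Φ (k + 2) / ((n : ℝ) - 1 + (k : ℝ) + 2)) := by
    have := hsum (n - 1)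
    simp only [hcast2] at this
    exact this
  rw [← tsum_mul_left, ← tsum_mul_left, ← tsum_mul_left,
    ← Summable.tsum_add (hs1.mul_left _) (hs2.mul_left _),
    ← Summable.tsum_sub ((hs1.mul_left _).add (hs2.mul_left _)) (hs3.mul_left _)]
  have htel : ∀ k : ℕ,
      -b * (((n : ℝ) + 2) / ((n : ℝ) + 1)) * (Φ (k + 2) / ((n : ℝ) + 1 + (k : ℝ) + 2))
        + (b + c * ((n : ℝ) - 1) + 0) * (Φ (k + 2) / ((n : ℝ) + (k : ℝ) + 2))
        - ((n : ℝ) - 2) * (c + 0 / ((n : ℝ) - 1)) * (Φ (k + 2) / ((n : ℝ) - 1 + (k : ℝ) + 2))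
      = Tfun b c Φ (n : ℝ) k - Tfun b c Φ (n : ℝ) (k + 1) :=
    fun k => telescope_step b c hc Φ hrec (n : ℝ) hN k
  rw [tsum_congr htel]
  -- summability of the telescoping series
  have hgsum : Summable (fun k : ℕ => Tfun b c Φ (n : ℝ) k - Tfun b c Φ (n : ℝ) (k + 1)) := by
    have hcomb := ((hs1.mul_left (-b * (((n : ℝ) + 2) / ((n : ℝ) + 1)))).add
      (hs2.mul_left (b + c * ((n : ℝ) - 1) + 0))).sub
      (hs3.mul_left (((n : ℝ) - 2) * (c + 0 / ((n : ℝ) - 1))))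
    exact hcomb.congr htel
  -- limits
  have hΦ0 : Tendsto Φ atTop (nhds 0) := by
    have h := hlim.mul tendsto_one_div_atTop_nhds_zero_nat
    rw [mul_zero] at h
    apply h.congr'
    filter_upwards [eventually_ge_atTop 1] with k hk
    have hk0 : (k : ℝ) ≠ 0 := Nat.cast_ne_zero.mpr (by omega)
    field_simp
  have hΦ0m : ∀ m : ℕ, Tendsto (fun j : ℕ => Φ (j + m)) atTop (nhds 0) := by
    intro m
    exact hΦ0.comp (Filter.tendsto_add_atTop_nat m)
  have hkey : ∀ m : ℕ, Tendsto (fun j : ℕ => ((j : ℝ) + (m : ℝ)) * Φ (j + m)) atTop (nhds Φinf) := by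
    intro m
    have h := hlim.comp (Filter.tendsto_add_atTop_nat m)
    apply h.congr
    intro j
    simp only [Function.comp_apply]
    push_cast
    ring
  have h4 : Tendsto (fun j : ℕ => ((j : ℝ) + 4) * Φ (j + 3)) atTop (nhds Φinf) := by
    have h := (hkey 3).add (hΦ0m 3)
    rw [add_zero] at h
    apply h.congr
    intro j
    push_cast
    ring
  have h3' : Tendsto (fun j : ℕ => ((j : ℝ) + 3) * Φ (j + 2)) atTop (nhds Φinf) := by
    have h := (hkey 2).add (hΦ0m 2)
    rw [add_zero] at h
    apply h.congr
    intro j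
    push_cast
    ring
  have hinv1 : Tendsto (fun j : ℕ => 1 / ((n : ℝ) + (j : ℝ) + 1)) atTop (nhds 0) := by
    have hden : Tendsto (fun j : ℕ => (n : ℝ) + (j : ℝ) + 1) atTop atTop := by
      apply tendsto_atTop_add_const_right
      exact tendsto_atTop_add_const_left _ _ tendsto_natCast_atTop_atTop
    simpa [one_div, Pi.inv_def] using hden.inv_tendsto_atTop
  have hinv2 : Tendsto (fun j : ℕ => 1 / ((n : ℝ) + (j : ℝ) + 2)) atTop (nhds 0) := by
    have hden : Tendsto (fun j : ℕ => (n : ℝ) + (j : ℝ) + 2) atTop atTop := by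
      apply tendsto_atTop_add_const_right
      exact tendsto_atTop_add_const_left _ _ tendsto_natCast_atTop_atTop
    simpa [one_div, Pi.inv_def] using hden.inv_tendsto_atTop
  have hinvj : Tendsto (fun j : ℕ => 1 / ((j : ℝ) + 1)) atTop (nhds 0) := by
    have hden : Tendsto (fun j : ℕ => (j : ℝ) + 1) atTop atTop :=
      tendsto_atTop_add_const_right _ _ tendsto_natCast_atTop_atTop
    simpa [one_div, Pi.inv_def] using hden.inv_tendsto_atTop
  have hfrac : Tendsto (fun j : ℕ => (j : ℝ) / ((j : ℝ) + 1)) atTop (nhds 1) := by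
    have h := (tendsto_const_nhds : Filter.Tendsto (fun _ : ℕ => (1:ℝ)) Filter.atTop (nhds 1)).sub hinvj
    rw [sub_zero] at h
    apply h.congr
    intro j
    have : (j : ℝ) + 1 ≠ 0 := by positivity
    field_simp
    ring
  have hA : Tendsto (fun j : ℕ =>
      -(c * ((j : ℝ) + 4) * Φ (j + 3) + b * Φ (j + 2)) / ((n : ℝ) + 1)) atTop
      (nhds (-(c * Φinf) / ((n : ℝ) + 1))) := by
    have h := (((h4.const_mul c).add ((hΦ0m 2).const_mul b)).neg).div_const ((n : ℝ) + 1)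
    rw [mul_zero, add_zero] at h
    apply h.congr
    intro j
    ring
  have hB : Tendsto (fun j : ℕ =>
      c * ((j : ℝ) + 3) * Φ (j + 2) / ((n : ℝ) + (j : ℝ) + 1)) atTop (nhds 0) := by
    have h := (h3'.const_mul c).mul hinv1
    rw [mul_zero] at h
    apply h.congr
    intro j
    ring
  have hC : Tendsto (fun j : ℕ =>
      b * (j : ℝ) / ((j : ℝ) + 1) * Φ (j + 1) / ((n : ℝ) + (j : ℝ) + 2)) atTop (nhds 0) := by
    have h := ((hfrac.const_mul b).mul (hΦ0m 1)).mul hinv2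
    simp only [mul_zero] at h
    apply h.congr
    intro j
    ring
  have hTlim : Tendsto (fun j : ℕ => Tfun b c Φ (n : ℝ) j) atTop
      (nhds (-(c * Φinf / ((n : ℝ) + 1)))) := by
    have h := (hA.add hB).add hC
    rw [add_zero, add_zero] at h
    have hval : -(c * Φinf) / ((n : ℝ) + 1) = -(c * Φinf / ((n : ℝ) + 1)) := by ring
    rw [hval] at h
    exact h
  have hT0 : Tfun b c Φ (n : ℝ) 0 = 0 := by
    have h := hrec 2 (by norm_num)
    norm_num at h
    rw [hΦ2] at h
    have hN1 : (n : ℝ) + 1 ≠ 0 := by positivity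
    have hN2 : (n : ℝ) + 2 ≠ 0 := by positivity
    have h3 : Φ 3 = (3 * c - b) / (4 * c) := by
      rw [eq_div_iff (by positivity)]; linear_combination h
    simp only [Tfun, hΦ2, h3]
    push_cast
    have hcne : (4:ℝ) * c ≠ 0 := by positivity
    field_simp
    ring
  have hps : Tendsto (fun m : ℕ => ∑ i ∈ Finset.range m,
      (Tfun b c Φ (n : ℝ) i - Tfun b c Φ (n : ℝ) (i + 1))) atTop
      (nhds (c * Φinf / ((n : ℝ) + 1))) := by
    have h := (tendsto_const_nhds : Filter.Tendsto (fun _ : ℕ => (0:ℝ)) Filter.atTop (nhds 0)).sub hTlim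
    rw [sub_neg_eq_add, zero_add] at h
    apply h.congr
    intro m
    rw [Finset.sum_range_sub' (Tfun b c Φ (n : ℝ)) m, hT0]
  exact tendsto_nhds_unique hgsum.hasSum.tendsto_sum_nat hps
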